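/- (Theorem 2, coefficient form.) Let H(x,y) = ((1−x)²(1−y)²(1−x²)(1−y²)(1−xy)²(1−x²y)(1−xy²))^{-1} ∈ ℚ[[x,y]] and let W(t,v) = (h₃(v)t³+h₂(v)t²+h₁(v)t+h₀(v))·((1−v)⁷(1+v)⁴(1+v²)(1−t)³(1+t)(1−vt))^{-1} ∈ ℚ[[t,v]], where h₃(v) = v²(v⁴−v³+3v²−v+1), h₂(v) = v(2v⁴−4v³+v²−v−1), h₁(v) = v(−v⁴−v³+v²−4v+2), h₀(v) = v⁴−v³+3v²−v+1. Then for all integers λ1 ≥ λ2 ≥ 0, the coefficient of t^{λ1−λ2}v^{λ2} in W equals (coefficient of x^{λ1}y^{λ2} in H) − (coefficient of x^{λ1+1}y^{λ2−1} in H), where the second term is 0 when λ2 = 0. (That is, W is the multiplicity series of the Hilbert series of the mixed trace algebra T₂ of two generic 3×3 matrices.) -/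

import Mathlib

open Finset

abbrev Q2 : Type := MvPowerSeries (Fin 2) ℚ

noncomputable def Xv (i : Fin 2) : Q2 := MvPowerSeries.X i

noncomputable def mon (i j : ℕ) : Fin 2 →₀ ℕ := Finsupp.single 0 i + Finsupp.single 1 j

noncomputable def c (i j : ℕ) (f : Q2) : ℚ := MvPowerSeries.coeff (mon i j) f

/-- Schur function S_{(l1,l2)}(x,y) for l1 ≥ l2. -/
noncomputable def schur (l1 l2 : ℕ) : Q2 :=
  (Xv 0 * Xv 1) ^ l2 * ∑ i ∈ range (l1 - l2 + 1), Xv 0 ^ i * Xv 1 ^ (l1 - l2 - i)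

/-- f = Σ_{l1 ≥ l2 ≥ 0} m(l1,l2) · S_{(l1,l2)}, expressed coefficientwise
(each coefficient receives only finitely many contributions, since `schur l1 l2`
is homogeneous of degree `l1 + l2`). -/
def IsSchurExpansion (m : ℕ → ℕ → ℚ) (f : Q2) : Prop :=
  ∀ i j : ℕ, c i j f =
    ∑ l1 ∈ range (i + j + 1), ∑ l2 ∈ range (l1 + 1), m l1 l2 * c i j (schur l1 l2)

/-- h(t,v) = Σ_{l1 ≥ l2 ≥ 0} m(l1,l2) t^{l1-l2} v^{l2}, the multiplicity series. -/
def IsMultSeries (m : ℕ → ℕ → ℚ) (h : Q2) : Prop :=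
  ∀ p q : ℕ, c p q h = m (p + q) q

/-- Substitution of φ0, φ1 (series with zero constant term) for the two variables of h:
the coefficient of a monomial e in h(φ0,φ1) only receives contributions from monomials
t^p v^q of h with p + q ≤ |e|. -/
noncomputable def subst2 (φ0 φ1 h : Q2) : Q2 :=
  fun e => ∑ p ∈ range (e 0 + e 1 + 1), ∑ q ∈ range (e 0 + e 1 + 1),
    MvPowerSeries.coeff (mon p q) h * MvPowerSeries.coeff e (φ0 ^ p * φ1 ^ q)

/-- Substitution of a series φ with zero constant term into a one-variable series a. -/
noncomputable def substP (φ : Q2) (a : PowerSeries ℚ) : Q2 :=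
  fun e => ∑ k ∈ range (e 0 + e 1 + 1),
    PowerSeries.coeff k a * MvPowerSeries.coeff e (φ ^ k)

/-- Hilbert series of the mixed trace algebra T₂ of two generic 3×3 matrices
(Berele–Stembridge), with x = Xv 0, y = Xv 1. -/
noncomputable def Hseries : Q2 :=
  ((1 - Xv 0) ^ 2 * (1 - Xv 1) ^ 2 * (1 - Xv 0 ^ 2) * (1 - Xv 1 ^ 2)
    * (1 - Xv 0 * Xv 1) ^ 2 * (1 - Xv 0 ^ 2 * Xv 1) * (1 - Xv 0 * Xv 1 ^ 2))⁻¹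

/-- W(t,v), the multiplicity series of Theorem 2, with t = Xv 0, v = Xv 1;
h₃(v) = v²(v⁴−v³+3v²−v+1), h₂(v) = v(2v⁴−4v³+v²−v−1),
h₁(v) = v(−v⁴−v³+v²−4v+2), h₀(v) = v⁴−v³+3v²−v+1. -/
noncomputable def Wseries : Q2 :=
  (Xv 1 ^ 2 * (Xv 1 ^ 4 - Xv 1 ^ 3 + 3 * Xv 1 ^ 2 - Xv 1 + 1) * Xv 0 ^ 3
    + Xv 1 * (2 * Xv 1 ^ 4 - 4 * Xv 1 ^ 3 + Xv 1 ^ 2 - Xv 1 - 1) * Xv 0 ^ 2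
    + Xv 1 * (-Xv 1 ^ 4 - Xv 1 ^ 3 + Xv 1 ^ 2 - 4 * Xv 1 + 2) * Xv 0
    + (Xv 1 ^ 4 - Xv 1 ^ 3 + 3 * Xv 1 ^ 2 - Xv 1 + 1))
  * ((1 - Xv 1) ^ 7 * (1 + Xv 1) ^ 4 * (1 + Xv 1 ^ 2)
      * (1 - Xv 0) ^ 3 * (1 + Xv 0) * (1 - Xv 1 * Xv 0))⁻¹

set_option linter.unnecessarySeqFocus false

lemma mon_apply0 (i j : ℕ) : (mon i j) 0 = i := by
  simp [mon, Finsupp.single_apply]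
lemma mon_apply1 (i j : ℕ) : (mon i j) 1 = j := by
  simp [mon, Finsupp.single_apply]
lemma eq_mon (d : Fin 2 →₀ ℕ) : d = mon (d 0) (d 1) := by
  ext i
  fin_cases i
  · simp [mon_apply0]
  · simp [mon_apply1]
lemma finsupp2_ext {d e : Fin 2 →₀ ℕ} (h0 : d 0 = e 0) (h1 : d 1 = e 1) : d = e := by
  rw [eq_mon d, eq_mon e, h0, h1]
lemma mon_add (a b c d : ℕ) : mon a b + mon c d = mon (a+c) (b+d) := by
  apply finsupp2_ext <;> simp [mon_apply0, mon_apply1]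
lemma coeff_apply (f : Q2) (e : Fin 2 →₀ ℕ) : MvPowerSeries.coeff e f = f e := rfl

noncomputable def sigFun (f : Q2) : Q2 :=
  fun e => if e 1 ≤ e 0 then f (mon (e 0 - e 1) (e 1)) else 0

lemma sigFun_mul (f g : Q2) : sigFun (f * g) = sigFun f * sigFun g := by
  funext e
  have hmul := MvPowerSeries.coeff_mul (R := ℚ) (n := e) (φ := sigFun f) (ψ := sigFun g)
  simp only [coeff_apply] at hmul
  show sigFun (f*g) e = (sigFun f * sigFun g) e
  rw [hmul]
  by_cases h : e 1 ≤ e 0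
  · have hfg := MvPowerSeries.coeff_mul (R := ℚ) (n := mon (e 0 - e 1) (e 1)) (φ := f) (ψ := g)
    simp only [coeff_apply] at hfg
    have hL : sigFun (f*g) e = (f*g) (mon (e 0 - e 1) (e 1)) := by simp [sigFun, h]
    rw [hL, hfg]
    rw [← Finset.sum_filter_of_ne
      (p := fun p : (Fin 2 →₀ ℕ) × (Fin 2 →₀ ℕ) => p.1 1 ≤ p.1 0 ∧ p.2 1 ≤ p.2 0)
      (f := fun p => sigFun f p.1 * sigFun g p.2) ?_]
    · refine Finset.sum_nbij'
        (i := fun q => (mon (q.1 0 + q.1 1) (q.1 1), mon (q.2 0 + q.2 1) (q.2 1)))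
        (j := fun p => (mon (p.1 0 - p.1 1) (p.1 1), mon (p.2 0 - p.2 1) (p.2 1)))
        ?_ ?_ ?_ ?_ ?_
      · intro q hq
        rw [HasAntidiagonal.mem_antidiagonal] at hq
        have h0 : q.1 0 + q.2 0 = e 0 - e 1 := by
          have := congrArg (fun d => d 0) hq; simpa [mon_apply0] using this
        have h1 : q.1 1 + q.2 1 = e 1 := by
          have := congrArg (fun d => d 1) hq; simpa [mon_apply1] using this
        rw [Finset.mem_filter, HasAntidiagonal.mem_antidiagonal]
        refine ⟨?_, by simp [mon_apply0, mon_apply1]⟩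
        rw [mon_add]
        rw [eq_mon e]
        exact congrArg₂ mon (by omega) (by omega)
      · intro p hp
        rw [Finset.mem_filter, HasAntidiagonal.mem_antidiagonal] at hp
        obtain ⟨hpe, hr1, hr2⟩ := hp
        have h0 : p.1 0 + p.2 0 = e 0 := by
          have := congrArg (fun d => d 0) hpe; simpa using this
        have h1 : p.1 1 + p.2 1 = e 1 := by
          have := congrArg (fun d => d 1) hpe; simpa using this
        rw [HasAntidiagonal.mem_antidiagonal, mon_add]
        exact congrArg₂ mon (by omega) (by omega)
      · intro q hq
        rw [HasAntidiagonal.mem_antidiagonal] at hq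
        refine Prod.ext ?_ ?_ <;>
          · apply finsupp2_ext <;> simp [mon_apply0, mon_apply1]
      · intro p hp
        rw [Finset.mem_filter, HasAntidiagonal.mem_antidiagonal] at hp
        obtain ⟨hpe, hr1, hr2⟩ := hp
        refine Prod.ext ?_ ?_ <;>
          · apply finsupp2_ext <;> simp [mon_apply0, mon_apply1] <;> omega
      · intro q hq
        simp only [sigFun, mon_apply0, mon_apply1]
        rw [if_pos (by omega), if_pos (by omega)]
        congr 1
        · exact congrArg f ((finsupp2_ext (by simp [mon_apply0]) (by simp [mon_apply1])).symm)
        · exact congrArg g ((finsupp2_ext (by simp [mon_apply0]) (by simp [mon_apply1])).symm)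
    · intro p hp hne
      rw [HasAntidiagonal.mem_antidiagonal] at hp
      by_contra hc
      have h0 : p.1 0 + p.2 0 = e 0 := by
        have := congrArg (fun d => d 0) hp; simpa using this
      have h1 : p.1 1 + p.2 1 = e 1 := by
        have := congrArg (fun d => d 1) hp; simpa using this
      apply hne
      rcases not_and_or.mp hc with h' | h'
      · simp [sigFun, if_neg h']
      · simp [sigFun, if_neg h']
  · have hL : sigFun (f*g) e = 0 := by simp [sigFun, h]
    rw [hL]
    symm
    apply Finset.sum_eq_zero
    intro p hp
    rw [HasAntidiagonal.mem_antidiagonal] at hp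
    have h0 : p.1 0 + p.2 0 = e 0 := by
      have := congrArg (fun d => d 0) hp; simpa using this
    have h1 : p.1 1 + p.2 1 = e 1 := by
      have := congrArg (fun d => d 1) hp; simpa using this
    by_cases h' : p.1 1 ≤ p.1 0
    · have : ¬ p.2 1 ≤ p.2 0 := by omega
      simp [sigFun, if_neg this]
    · simp [sigFun, if_neg h']

noncomputable def swapFun (f : Q2) : Q2 := fun e => f (mon (e 1) (e 0))

lemma swapFun_mul (f g : Q2) : swapFun (f * g) = swapFun f * swapFun g := by
  funext e
  have hmul := MvPowerSeries.coeff_mul (R := ℚ) (n := e) (φ := swapFun f) (ψ := swapFun g)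
  simp only [coeff_apply] at hmul
  show swapFun (f*g) e = (swapFun f * swapFun g) e
  rw [hmul]
  have hfg := MvPowerSeries.coeff_mul (R := ℚ) (n := mon (e 1) (e 0)) (φ := f) (ψ := g)
  simp only [coeff_apply] at hfg
  show (f*g) (mon (e 1) (e 0)) = _
  rw [hfg]
  refine Finset.sum_nbij'
    (i := fun q => (mon (q.1 1) (q.1 0), mon (q.2 1) (q.2 0)))
    (j := fun p => (mon (p.1 1) (p.1 0), mon (p.2 1) (p.2 0)))
    ?_ ?_ ?_ ?_ ?_
  · intro q hq
    rw [HasAntidiagonal.mem_antidiagonal] at hq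
    have h0 : q.1 0 + q.2 0 = e 1 := by
      have := congrArg (fun d => d 0) hq; simpa [mon_apply0] using this
    have h1 : q.1 1 + q.2 1 = e 0 := by
      have := congrArg (fun d => d 1) hq; simpa [mon_apply1] using this
    rw [HasAntidiagonal.mem_antidiagonal, mon_add, eq_mon e]
    exact congrArg₂ mon (by omega) (by omega)
  · intro p hp
    rw [HasAntidiagonal.mem_antidiagonal] at hp
    have h0 : p.1 0 + p.2 0 = e 0 := by
      have := congrArg (fun d => d 0) hp; simpa using this
    have h1 : p.1 1 + p.2 1 = e 1 := by
      have := congrArg (fun d => d 1) hp; simpa using this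
    rw [HasAntidiagonal.mem_antidiagonal, mon_add]
    exact congrArg₂ mon (by omega) (by omega)
  · intro q _
    refine Prod.ext ?_ ?_ <;>
      · apply finsupp2_ext <;> simp [mon_apply0, mon_apply1]
  · intro p _
    refine Prod.ext ?_ ?_ <;>
      · apply finsupp2_ext <;> simp [mon_apply0, mon_apply1]
  · intro q _
    simp only [swapFun, mon_apply0, mon_apply1]
    congr 1
    · exact congrArg f (eq_mon q.1)
    · exact congrArg g (eq_mon q.2)

lemma q2_one_apply (d : Fin 2 →₀ ℕ) : (1 : Q2) d = if d = 0 then 1 else 0 := by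
  classical
  simpa only [coeff_apply] using MvPowerSeries.coeff_one (σ := Fin 2) (R := ℚ) (n := d)

lemma mon_eq_zero_iff (a b : ℕ) : mon a b = 0 ↔ a = 0 ∧ b = 0 := by
  constructor
  · intro h
    have c0 := congrArg (fun d => d 0) h
    have c1 := congrArg (fun d => d 1) h
    simp [mon_apply0, mon_apply1] at c0 c1
    exact ⟨c0, c1⟩
  · rintro ⟨rfl, rfl⟩
    apply finsupp2_ext <;> simp [mon_apply0, mon_apply1]

lemma sigFun_one : sigFun 1 = 1 := by
  funext e
  show sigFun 1 e = (1:Q2) e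
  rw [sigFun]
  conv_rhs => rw [eq_mon e]
  by_cases h : e 1 ≤ e 0
  · rw [if_pos h, q2_one_apply, q2_one_apply]
    simp only [mon_eq_zero_iff]
    by_cases h2 : e 0 = 0 ∧ e 1 = 0
    · rw [if_pos (by omega), if_pos (by exact h2)]
    · rw [if_neg (by omega), if_neg (by exact h2)]
  · rw [if_neg h, q2_one_apply]
    simp only [mon_eq_zero_iff]
    rw [if_neg (by omega)]

lemma swapFun_one : swapFun 1 = 1 := by
  funext e
  show swapFun 1 e = (1:Q2) e
  rw [swapFun]
  conv_rhs => rw [eq_mon e]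
  rw [q2_one_apply, q2_one_apply]
  simp only [mon_eq_zero_iff]
  by_cases h2 : e 0 = 0 ∧ e 1 = 0
  · rw [if_pos (by omega), if_pos (by omega)]
  · rw [if_neg (by omega), if_neg (by omega)]

lemma sigFun_add (f g : Q2) : sigFun (f + g) = sigFun f + sigFun g := by
  funext e
  show sigFun (f+g) e = sigFun f e + sigFun g e
  simp only [sigFun]
  by_cases h : e 1 ≤ e 0
  · simp only [if_pos h]; rfl
  · simp only [if_neg h]; ring
lemma swapFun_add (f g : Q2) : swapFun (f + g) = swapFun f + swapFun g := by
  funext e; rfl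

lemma sigFun_zero : sigFun 0 = 0 := by
  funext e
  show sigFun 0 e = 0
  simp only [sigFun]
  by_cases h : e 1 ≤ e 0
  · simp only [if_pos h]; rfl
  · simp only [if_neg h]

noncomputable def sigHom : Q2 →+* Q2 :=
  { toFun := sigFun, map_one' := sigFun_one, map_mul' := sigFun_mul,
    map_zero' := sigFun_zero, map_add' := sigFun_add }
noncomputable def swapHom : Q2 →+* Q2 :=
  { toFun := swapFun, map_one' := swapFun_one, map_mul' := swapFun_mul,
    map_zero' := rfl, map_add' := swapFun_add }
noncomputable def rhoHom : Q2 →+* Q2 := swapHom.comp sigHom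

lemma mon_eq_mon_iff {a b a' b' : ℕ} : mon a b = mon a' b' ↔ a = a' ∧ b = b' := by
  constructor
  · intro h
    have c0 := congrArg (fun d => d 0) h
    have c1 := congrArg (fun d => d 1) h
    simp only [mon_apply0, mon_apply1] at c0 c1
    exact ⟨c0, c1⟩
  · rintro ⟨rfl, rfl⟩; rfl

lemma single0_eq_mon (n : ℕ) : Finsupp.single (0 : Fin 2) n = mon n 0 := by
  apply finsupp2_ext <;> simp [mon_apply0, mon_apply1]
lemma single1_eq_mon (n : ℕ) : Finsupp.single (1 : Fin 2) n = mon 0 n := by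
  apply finsupp2_ext <;> simp [mon_apply0, mon_apply1]

lemma X0_apply (a b : ℕ) : (Xv 0) (mon a b) = if a = 1 ∧ b = 0 then 1 else 0 := by
  classical
  rw [show (Xv 0) (mon a b) = MvPowerSeries.coeff (mon a b) (MvPowerSeries.X 0) from rfl,
    MvPowerSeries.coeff_X, single0_eq_mon]
  simp only [mon_eq_mon_iff]
lemma X1_apply (a b : ℕ) : (Xv 1) (mon a b) = if a = 0 ∧ b = 1 then 1 else 0 := by
  classical
  rw [show (Xv 1) (mon a b) = MvPowerSeries.coeff (mon a b) (MvPowerSeries.X 1) from rfl,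
    MvPowerSeries.coeff_X, single1_eq_mon]
  simp only [mon_eq_mon_iff]
lemma X0X1_apply (a b : ℕ) : (Xv 0 * Xv 1) (mon a b) = if a = 1 ∧ b = 1 then 1 else 0 := by
  classical
  have : Xv 0 * Xv 1 = MvPowerSeries.monomial (mon 1 1) 1 := by
    rw [Xv, Xv, MvPowerSeries.X_def, MvPowerSeries.X_def,
      MvPowerSeries.monomial_mul_monomial, one_mul]
    congr 1
  rw [show ((Xv 0 * Xv 1) (mon a b)) = MvPowerSeries.coeff (mon a b) (Xv 0 * Xv 1) from rfl,
    this, MvPowerSeries.coeff_monomial]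
  simp only [mon_eq_mon_iff]

lemma sig_X0 : sigHom (Xv 0) = Xv 0 := by
  funext e
  show sigFun (Xv 0) e = (Xv 0) e
  rw [eq_mon e, sigFun]
  simp only [mon_apply0, mon_apply1, X0_apply]
  split_ifs <;> first | rfl | (exfalso; omega)
lemma sig_X1 : sigHom (Xv 1) = Xv 0 * Xv 1 := by
  funext e
  show sigFun (Xv 1) e = (Xv 0 * Xv 1) e
  rw [eq_mon e, sigFun]
  simp only [mon_apply0, mon_apply1, X1_apply, X0X1_apply]
  split_ifs <;> first | rfl | (exfalso; omega)
lemma swap_X0 : swapHom (Xv 0) = Xv 1 := by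
  funext e
  show swapFun (Xv 0) e = (Xv 1) e
  rw [eq_mon e, swapFun]
  simp only [mon_apply0, mon_apply1, X0_apply, X1_apply]
  split_ifs <;> first | rfl | (exfalso; omega)
lemma swap_X1 : swapHom (Xv 1) = Xv 0 := by
  funext e
  show swapFun (Xv 1) e = (Xv 0) e
  rw [eq_mon e, swapFun]
  simp only [mon_apply0, mon_apply1, X0_apply, X1_apply]
  split_ifs <;> first | rfl | (exfalso; omega)
lemma rho_X0 : rhoHom (Xv 0) = Xv 1 := by
  show swapHom (sigHom (Xv 0)) = Xv 1
  rw [sig_X0, swap_X0]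
lemma rho_X1 : rhoHom (Xv 1) = Xv 1 * Xv 0 := by
  show swapHom (sigHom (Xv 1)) = Xv 1 * Xv 0
  rw [sig_X1, map_mul, swap_X0, swap_X1]

lemma c_sig (f : Q2) (i j : ℕ) : c i j (sigHom f) = if j ≤ i then c (i-j) j f else 0 := by
  show sigFun f (mon i j) = _
  rw [sigFun]
  simp only [mon_apply0, mon_apply1]
  rfl
lemma c_swap (f : Q2) (i j : ℕ) : c i j (swapHom f) = c j i f := by
  show swapFun f (mon i j) = _
  rw [swapFun]
  simp only [mon_apply0, mon_apply1]
  rfl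
lemma c_rho (f : Q2) (i j : ℕ) : c i j (rhoHom f) = if i ≤ j then c (j-i) i f else 0 := by
  show c i j (swapHom (sigHom f)) = _
  rw [c_swap, c_sig]

lemma coeff_X0_mul (f : Q2) (i j : ℕ) :
    c i j (Xv 0 * f) = if 1 ≤ i then c (i-1) j f else 0 := by
  classical
  rw [c, Xv, MvPowerSeries.X_def, MvPowerSeries.coeff_monomial_mul]
  by_cases h : 1 ≤ i
  · rw [if_pos, if_pos h, one_mul]
    · rw [show mon i j - Finsupp.single (0 : Fin 2) 1 = mon (i-1) j from
        finsupp2_ext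
          (by simp [Finsupp.tsub_apply, mon_apply0, Finsupp.single_apply])
          (by simp [Finsupp.tsub_apply, mon_apply1, Finsupp.single_apply])]
      rfl
    · rw [Finsupp.single_le_iff, mon_apply0]; exact h
  · rw [if_neg, if_neg h]
    rw [Finsupp.single_le_iff, mon_apply0]; exact h
lemma coeff_X1_mul (f : Q2) (i j : ℕ) :
    c i j (Xv 1 * f) = if 1 ≤ j then c i (j-1) f else 0 := by
  classical
  rw [c, Xv, MvPowerSeries.X_def, MvPowerSeries.coeff_monomial_mul]
  by_cases h : 1 ≤ j
  · rw [if_pos, if_pos h, one_mul]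
    · rw [show mon i j - Finsupp.single (1 : Fin 2) 1 = mon i (j-1) from
        finsupp2_ext
          (by simp [Finsupp.tsub_apply, mon_apply0, Finsupp.single_apply])
          (by simp [Finsupp.tsub_apply, mon_apply1, Finsupp.single_apply])]
      rfl
    · rw [Finsupp.single_le_iff, mon_apply1]; exact h
  · rw [if_neg, if_neg h]
    rw [Finsupp.single_le_iff, mon_apply1]; exact h

noncomputable def DH : Q2 :=
  (1 - Xv 0) ^ 2 * (1 - Xv 1) ^ 2 * (1 - Xv 0 ^ 2) * (1 - Xv 1 ^ 2)
    * (1 - Xv 0 * Xv 1) ^ 2 * (1 - Xv 0 ^ 2 * Xv 1) * (1 - Xv 0 * Xv 1 ^ 2)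
noncomputable def AW : Q2 :=
  Xv 1 ^ 2 * (Xv 1 ^ 4 - Xv 1 ^ 3 + 3 * Xv 1 ^ 2 - Xv 1 + 1) * Xv 0 ^ 3
    + Xv 1 * (2 * Xv 1 ^ 4 - 4 * Xv 1 ^ 3 + Xv 1 ^ 2 - Xv 1 - 1) * Xv 0 ^ 2
    + Xv 1 * (-Xv 1 ^ 4 - Xv 1 ^ 3 + Xv 1 ^ 2 - 4 * Xv 1 + 2) * Xv 0
    + (Xv 1 ^ 4 - Xv 1 ^ 3 + 3 * Xv 1 ^ 2 - Xv 1 + 1)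
noncomputable def DW : Q2 :=
  (1 - Xv 1) ^ 7 * (1 + Xv 1) ^ 4 * (1 + Xv 1 ^ 2)
    * (1 - Xv 0) ^ 3 * (1 + Xv 0) * (1 - Xv 1 * Xv 0)

lemma ccDH : MvPowerSeries.constantCoeff DH = 1 := by
  simp [DH, Xv]
lemma ccDW : MvPowerSeries.constantCoeff DW = 1 := by
  simp [DW, Xv]

lemma hH_eq : DH * Hseries = 1 := by
  rw [show Hseries = DH⁻¹ from rfl]
  exact MvPowerSeries.mul_inv_cancel _ (by rw [ccDH]; norm_num)
lemma hW_eq : Wseries * DW = AW := by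
  rw [show Wseries = AW * DW⁻¹ from rfl, mul_assoc,
    MvPowerSeries.inv_mul_cancel _ (by rw [ccDW]; norm_num), mul_one]

lemma cancel {u v k : Q2} (hk : MvPowerSeries.constantCoeff k ≠ 0)
    (h : u * k = v * k) : u = v := by
  have h2 := congrArg (· * k⁻¹) h
  simpa [mul_assoc, MvPowerSeries.mul_inv_cancel _ hk] using h2

set_option maxHeartbeats 16000000 in
lemma star' :
    (Xv 0 * sigHom Wseries - Xv 1 * rhoHom Wseries) * DH = Xv 0 - Xv 1 := by
  have h1 := congrArg sigHom hW_eq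
  rw [map_mul] at h1
  simp only [DW, AW, map_mul, map_sub, map_add, map_pow, map_one, map_ofNat, map_neg,
    sig_X0, sig_X1] at h1
  have h2 := congrArg rhoHom hW_eq
  rw [map_mul] at h2
  simp only [DW, AW, map_mul, map_sub, map_add, map_pow, map_one, map_ofNat, map_neg,
    rho_X0, rho_X1] at h2
  apply cancel (k := ((1 - Xv 0) ^ 3 * (1 + Xv 0) * (1 - Xv 0 * Xv 1 * Xv 0)) * ((1 - Xv 1) ^ 3 * (1 + Xv 1) * (1 - Xv 1 * Xv 0 * Xv 1)) * ((1 - Xv 0 * Xv 1) ^ 7 * (1 + Xv 0 * Xv 1) ^ 4 * (1 + (Xv 0 * Xv 1) ^ 2)))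
  · simp [Xv]
  · rw [DH]
    linear_combination (Xv 0 * ((1 - Xv 0) ^ 2 * (1 - Xv 1) ^ 2 * (1 - Xv 0 ^ 2) * (1 - Xv 1 ^ 2) * (1 - Xv 0 * Xv 1) ^ 2 * (1 - Xv 0 ^ 2 * Xv 1) * (1 - Xv 0 * Xv 1 ^ 2)) * ((1 - Xv 1) ^ 3 * (1 + Xv 1) * (1 - Xv 1 * Xv 0 * Xv 1))) * h1 - (Xv 1 * ((1 - Xv 0) ^ 2 * (1 - Xv 1) ^ 2 * (1 - Xv 0 ^ 2) * (1 - Xv 1 ^ 2) * (1 - Xv 0 * Xv 1) ^ 2 * (1 - Xv 0 ^ 2 * Xv 1) * (1 - Xv 0 * Xv 1 ^ 2)) * ((1 - Xv 0) ^ 3 * (1 + Xv 0) * (1 - Xv 0 * Xv 1 * Xv 0))) * h2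

lemma star :
    Xv 0 * sigHom Wseries - Xv 1 * rhoHom Wseries = (Xv 0 - Xv 1) * Hseries := by
  apply cancel (k := DH) (by rw [ccDH]; norm_num)
  rw [star']
  symm
  calc (Xv 0 - Xv 1) * Hseries * DH = (Xv 0 - Xv 1) * (DH * Hseries) := by ring
    _ = Xv 0 - Xv 1 := by rw [hH_eq, mul_one]

lemma c_sub (i j : ℕ) (f g : Q2) : c i j (f - g) = c i j f - c i j g := by
  simp [c, map_sub]


/-- Theorem 2, coefficient form: the coefficient of t^{λ1−λ2}v^{λ2}
in W equals coeff_{x^{λ1}y^{λ2}}(H) − coeff_{x^{λ1+1}y^{λ2−1}}(H), i.e. W is the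
multiplicity series of the Hilbert series of the mixed trace algebra T₂. -/
theorem W_is_multiplicity_series_of_H_coefficientwise :
    ∀ l1 l2 : ℕ, l2 ≤ l1 →
      c (l1 - l2) l2 Wseries
        = c l1 l2 Hseries - (if l2 = 0 then 0 else c (l1 + 1) (l2 - 1) Hseries) := by
  intro l1 l2 hle
  have hc := congrArg (c (l1 + 1) l2) star
  rw [c_sub, coeff_X0_mul, coeff_X1_mul, if_pos (by omega : 1 ≤ l1 + 1)] at hc
  simp only [Nat.add_sub_cancel] at hc
  rw [c_sig, if_pos hle] at hc
  rw [show (Xv 0 - Xv 1) * Hseries = Xv 0 * Hseries - Xv 1 * Hseries from by ring,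
    c_sub, coeff_X0_mul, coeff_X1_mul, if_pos (by omega : 1 ≤ l1 + 1)] at hc
  by_cases h0 : l2 = 0
  · subst h0
    rw [if_neg (by omega), if_neg (by omega), sub_zero, sub_zero] at hc
    rw [hc, if_pos rfl, sub_zero, Nat.add_sub_cancel]
  · rw [if_pos (by omega : 1 ≤ l2), c_rho, if_neg (by omega), sub_zero,
      if_pos (by omega : 1 ≤ l2)] at hc
    rw [hc, if_neg h0, Nat.add_sub_cancel]
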